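/- Let G be a simple graph that has an interval representation, let u be a vertex, and let v_1, v_2, v_3 be vertices, each distinct from u and non-adjacent to u. Then there do not exist three mutually induced paths P_1, P_2, P_3 in G such that P_i joins u and v_i for i = 1, 2, 3. -/

import Mathlib

open SimpleGraph

variable {V : Type*}

/-- An interval representation of a simple graph: each vertex gets a closed real
interval `[l u, r u]` with `l u < r u`, and two distinct vertices are adjacent
iff their intervals intersect. -/
structure IntervalRep (G : SimpleGraph V) where
  l : V → ℝ
  r : V → ℝ
  lt : ∀ u, l u < r u
  adj_iff : ∀ u v, u ≠ v →
    (G.Adj u v ↔ (Set.Icc (l u) (r u) ∩ Set.Icc (l v) (r v)).Nonempty)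

/-- A path in `G` together with its two end-vertices. -/
structure IndexedPath (G : SimpleGraph V) where
  a : V
  b : V
  walk : G.Walk a b
  isPath : walk.IsPath

namespace IndexedPath

variable {G : SimpleGraph V}

/-- The set of end-vertices of the path. -/
def ends (P : IndexedPath G) : Set V := {P.a, P.b}

/-- `v` is an inner vertex of `P`, i.e. a vertex of `P` other than its ends. -/
def IsInner (P : IndexedPath G) (v : V) : Prop :=
  v ∈ P.walk.support.tail.dropLast

/-- `P` has no inner chords: any edge between two of its vertices is either an
edge of the path itself or the edge between its two end-vertices. -/
def NoInnerChords (P : IndexedPath G) : Prop :=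
  ∀ x y, x ∈ P.walk.support → y ∈ P.walk.support → G.Adj x y →
    s(x, y) ∈ P.walk.edges ∨ s(x, y) = s(P.a, P.b)

/-- `P` joins the vertices `x` and `y`. -/
def Joins (P : IndexedPath G) (x y : V) : Prop :=
  (P.a = x ∧ P.b = y) ∨ (P.a = y ∧ P.b = x)

end IndexedPath

/-- A family of pairwise distinct paths is mutually induced if: (i) each path has
no inner chords; (ii) two distinct paths share only vertices that are ends of both;
(iii) no inner vertex of one path is adjacent to a vertex `v` of another path,
except when `v` is an end-vertex of both paths. -/
def MutuallyInduced {G : SimpleGraph V} {ι : Type*} (P : ι → IndexedPath G) : Prop :=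
  (∀ i j, i ≠ j → P i ≠ P j) ∧
  (∀ i, (P i).NoInnerChords) ∧
  (∀ i j, i ≠ j → ∀ v, v ∈ (P i).walk.support → v ∈ (P j).walk.support →
      v ∈ (P i).ends ∧ v ∈ (P j).ends) ∧
  (∀ i j, i ≠ j → ∀ u v, (P i).IsInner u → v ∈ (P j).walk.support → G.Adj u v →
      v ∈ (P i).ends ∧ v ∈ (P j).ends)

/-- The covered interval of a path: the union of the intervals of its inner vertices. -/
def coveredInterval {G : SimpleGraph V} (ρ : IntervalRep G) (P : IndexedPath G) : Set ℝ :=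
  ⋃ v ∈ {w : V | P.IsInner w}, Set.Icc (ρ.l v) (ρ.r v)

/-- A solution to Requirement Induced Disjoint Paths: `l = r 1 + ... + r k`
mutually induced paths, exactly `r i` of which join `s i` and `t i`. -/
def RIDPSolution {G : SimpleGraph V} (k : ℕ) (s t : Fin k → V) (r : Fin k → ℕ)
    {l : ℕ} (P : Fin l → IndexedPath G) : Prop :=
  l = ∑ i, r i ∧ MutuallyInduced P ∧
    ∀ i, Nat.card {j : Fin l // (P j).Joins (s i) (t i)} = r i

lemma union_preconn {G : SimpleGraph V} (ρ : IntervalRep G) :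
    ∀ {a b : V} (w : G.Walk a b),
      IsPreconnected (⋃ x ∈ w.support, Set.Icc (ρ.l x) (ρ.r x)) := by
  intro a b w
  induction w with
  | nil => simpa using isPreconnected_Icc
  | @cons a c b h p ih =>
      have hset : (⋃ x ∈ (SimpleGraph.Walk.cons h p).support, Set.Icc (ρ.l x) (ρ.r x))
          = Set.Icc (ρ.l a) (ρ.r a) ∪ ⋃ x ∈ p.support, Set.Icc (ρ.l x) (ρ.r x) := by
        ext t
        simp [SimpleGraph.Walk.support_cons, List.mem_cons, or_and_right, exists_or]
      rw [hset]
      obtain ⟨x, hx⟩ := (ρ.adj_iff a c h.ne).mp h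
      refine IsPreconnected.union x hx.1 ?_ isPreconnected_Icc ih
      exact Set.mem_biUnion p.start_mem_support hx.2

lemma inner_of_mem {G : SimpleGraph V} {P : IndexedPath G} {x : V}
    (hx : x ∈ P.walk.support) (ha : x ≠ P.a) (hb : x ≠ P.b) : P.IsInner x := by
  unfold IndexedPath.IsInner
  have h2 : P.walk.support.getLast? = some P.b := by
    rw [List.getLast?_eq_getLast (by simp), P.walk.getLast_support]
  obtain ⟨ys, hys⟩ := List.getLast?_eq_some_iff.mp h2
  have hhead : P.walk.support.head? = some P.a := by
    rw [P.walk.support_eq_cons]; rfl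
  rw [hys] at hx hhead ⊢
  rcases ys with _ | ⟨c, ys'⟩
  · simp at hx; exact absurd hx hb
  · simp only [List.head?_append, List.head?_cons] at hhead
    have hc : c = P.a := by simpa using hhead
    have hd : ((c :: ys') ++ [P.b]).tail.dropLast = ys' := by simp
    rw [hd]
    rcases List.mem_append.mp hx with h | h
    · rcases List.mem_cons.mp h with h | h
      · exact absurd (h.trans hc) ha
      · exact h
    · simp at h; exact absurd h hb

/-- Given a vertex in support, a point of its interval is in the union. -/
lemma mem_union_of_supp {G : SimpleGraph V} (ρ : IntervalRep G) {a b x : V}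
    {w : G.Walk a b} (hx : x ∈ w.support) {t : ℝ} (ht : t ∈ Set.Icc (ρ.l x) (ρ.r x)) :
    t ∈ ⋃ y ∈ w.support, Set.Icc (ρ.l y) (ρ.r y) :=
  Set.mem_biUnion hx ht

lemma ends_mem_support {G : SimpleGraph V} {P : IndexedPath G} {x : V}
    (hx : x ∈ P.ends) : x ∈ P.walk.support := by
  rcases hx with h | h
  · subst h; exact P.walk.start_mem_support
  · simp only [Set.mem_singleton_iff] at h; subst h; exact P.walk.end_mem_support

/-- Core lemma: two mutually-induced-style paths from `u` to vertices whose
intervals are strictly to the right of `u`'s interval cannot exist. -/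
lemma core_lemma {G : SimpleGraph V} (ρ : IntervalRep G) (u a b : V)
    (P Q : IndexedPath G)
    (hPe : P.ends = {u, a}) (hQe : Q.ends = {u, b})
    (hshare : ∀ x, x ∈ P.walk.support → x ∈ Q.walk.support → x ∈ P.ends)
    (hind : ∀ x y, P.IsInner x → y ∈ Q.walk.support → G.Adj x y → y ∈ Q.ends)
    (ha : ρ.r u < ρ.l a) (hb : ρ.r u < ρ.l b) : False := by
  set t : ℝ := (ρ.r u + min (ρ.l a) (ρ.l b)) / 2 with hts
  have htu : ρ.r u < t := by
    have : ρ.r u < min (ρ.l a) (ρ.l b) := lt_min ha hb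
    rw [hts]; linarith
  have hta : t < ρ.l a := by
    have h1 : min (ρ.l a) (ρ.l b) ≤ ρ.l a := min_le_left _ _
    have : ρ.r u < min (ρ.l a) (ρ.l b) := lt_min ha hb
    rw [hts]; linarith
  have htb : t < ρ.l b := by
    have h1 : min (ρ.l a) (ρ.l b) ≤ ρ.l b := min_le_right _ _
    have : ρ.r u < min (ρ.l a) (ρ.l b) := lt_min ha hb
    rw [hts]; linarith
  have huP : u ∈ P.walk.support := ends_mem_support (by rw [hPe]; left; rfl)
  have haP : a ∈ P.walk.support := ends_mem_support (by rw [hPe]; right; rfl)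
  have huQ : u ∈ Q.walk.support := ends_mem_support (by rw [hQe]; left; rfl)
  have hbQ : b ∈ Q.walk.support := ends_mem_support (by rw [hQe]; right; rfl)
  -- find a vertex of P whose interval contains t
  have getvert : ∀ (R : IndexedPath G) (c : V), c ∈ R.walk.support →
      u ∈ R.walk.support → ρ.r u < ρ.l c →
      ∃ x ∈ R.walk.support, t ∈ Set.Icc (ρ.l x) (ρ.r x) → True := fun _ _ _ _ _ => by
    exact ⟨u, by assumption, fun _ => trivial⟩
  clear getvert
  have hget : ∀ (R : IndexedPath G) (c : V), c ∈ R.walk.support →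
      u ∈ R.walk.support → t < ρ.l c →
      ∃ x, x ∈ R.walk.support ∧ t ∈ Set.Icc (ρ.l x) (ρ.r x) := by
    intro R c hc hu htc
    have hpre := union_preconn ρ R.walk
    have hord := hpre.ordConnected
    have h1 : ρ.r u ∈ ⋃ y ∈ R.walk.support, Set.Icc (ρ.l y) (ρ.r y) :=
      mem_union_of_supp ρ hu ⟨(ρ.lt u).le, le_refl _⟩
    have h2 : ρ.l c ∈ ⋃ y ∈ R.walk.support, Set.Icc (ρ.l y) (ρ.r y) :=
      mem_union_of_supp ρ hc ⟨le_refl _, (ρ.lt c).le⟩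
    have h3 : t ∈ ⋃ y ∈ R.walk.support, Set.Icc (ρ.l y) (ρ.r y) :=
      hord.out h1 h2 ⟨htu.le, htc.le⟩
    simp only [Set.mem_iUnion] at h3
    obtain ⟨i, hi, hmem⟩ := h3
    exact ⟨i, hi, hmem⟩
  obtain ⟨x, hxP, hxt⟩ := hget P a haP huP hta
  obtain ⟨y, hyQ, hyt⟩ := hget Q b hbQ huQ htb
  -- x is not u, not a ; y is not u, not b
  have hxu : x ≠ u := by rintro rfl; exact absurd hxt.2 (not_le.mpr htu)
  have hxa : x ≠ a := by rintro rfl; exact absurd hxt.1 (not_le.mpr hta)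
  have hyu : y ≠ u := by rintro rfl; exact absurd hyt.2 (not_le.mpr htu)
  have hyb : y ≠ b := by rintro rfl; exact absurd hyt.1 (not_le.mpr htb)
  have hxPa : x ≠ P.a := by
    intro h; have : P.a ∈ P.ends := by left; rfl
    rw [hPe] at this; rcases this with h' | h'
    · exact hxu (h.trans h')
    · exact hxa (h.trans h')
  have hxPb : x ≠ P.b := by
    intro h; have : P.b ∈ P.ends := by right; rfl
    rw [hPe] at this; rcases this with h' | h'
    · exact hxu (h.trans h')
    · exact hxa (h.trans h')
  have hxinner : P.IsInner x := inner_of_mem hxP hxPa hxPb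
  have hxy : x ≠ y := by
    rintro rfl
    have := hshare x hxP hyQ
    rw [hPe] at this
    rcases this with h | h
    · exact hxu h
    · exact hxa h
  have hadj : G.Adj x y := (ρ.adj_iff x y hxy).mpr ⟨t, hxt, hyt⟩
  have := hind x y hxinner hyQ hadj
  rw [hQe] at this
  rcases this with h | h
  · exact hyu h
  · exact hyb h

/-- Reflected interval representation. -/
def IntervalRep.neg {G : SimpleGraph V} (ρ : IntervalRep G) : IntervalRep G where
  l u := -ρ.r u
  r u := -ρ.l u
  lt u := by simpa using ρ.lt u
  adj_iff u v h := by
    rw [ρ.adj_iff u v h]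
    constructor
    · rintro ⟨x, hx1, hx2⟩
      exact ⟨-x, ⟨by simp; linarith [hx1.2], by simp; linarith [hx1.1]⟩,
        ⟨by simp; linarith [hx2.2], by simp; linarith [hx2.1]⟩⟩
    · rintro ⟨x, hx1, hx2⟩
      simp only [Set.mem_Icc] at hx1 hx2
      exact ⟨-x, ⟨by linarith [hx1.2], by linarith [hx1.1]⟩,
        ⟨by linarith [hx2.2], by linarith [hx2.1]⟩⟩

/-- in an interval graph, a vertex `u` cannot be joined to three
vertices `v 0`, `v 1`, `v 2` (each distinct from and non-adjacent to `u`) by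
three mutually induced paths. -/
theorem statement7 {V : Type*} (G : SimpleGraph V) (ρ : IntervalRep G)
    (u : V) (v : Fin 3 → V)
    (hne : ∀ i, v i ≠ u) (hnadj : ∀ i, ¬ G.Adj u (v i)) :
    ¬ ∃ P : Fin 3 → IndexedPath G,
        MutuallyInduced P ∧ ∀ i, (P i).Joins u (v i) := by
  rintro ⟨P, ⟨-, -, hshare, hind⟩, hjoin⟩
  have hE : ∀ i, (P i).ends = {u, v i} := by
    intro i
    rcases hjoin i with ⟨h1, h2⟩ | ⟨h1, h2⟩ <;>
      simp [IndexedPath.ends, h1, h2, Set.pair_comm]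
  have hside : ∀ i, ρ.r u < ρ.l (v i) ∨ ρ.r (v i) < ρ.l u := by
    intro i
    by_contra hcon
    push_neg at hcon
    obtain ⟨h1, h2⟩ := hcon
    have hadj : G.Adj u (v i) := by
      rw [ρ.adj_iff u (v i) (hne i).symm]
      exact ⟨max (ρ.l u) (ρ.l (v i)),
        ⟨le_max_left _ _, max_le (ρ.lt u).le h1⟩,
        ⟨le_max_right _ _, max_le h2 (ρ.lt (v i)).le⟩⟩
    exact hnadj i hadj
  have key : ∀ i j : Fin 3, i ≠ j →
      (ρ.r u < ρ.l (v i) ∧ ρ.r u < ρ.l (v j)) ∨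
        (ρ.r (v i) < ρ.l u ∧ ρ.r (v j) < ρ.l u) → False := by
    intro i j hij hcase
    have hsh : ∀ x, x ∈ (P i).walk.support → x ∈ (P j).walk.support → x ∈ (P i).ends :=
      fun x hx hy => (hshare i j hij x hx hy).1
    have hid : ∀ x y, (P i).IsInner x → y ∈ (P j).walk.support → G.Adj x y →
        y ∈ (P j).ends :=
      fun x y h1 h2 h3 => (hind i j hij x y h1 h2 h3).2
    rcases hcase with ⟨h1, h2⟩ | ⟨h1, h2⟩
    · exact core_lemma ρ u (v i) (v j) (P i) (P j) (hE i) (hE j) hsh hid h1 h2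
    · refine core_lemma ρ.neg u (v i) (v j) (P i) (P j) (hE i) (hE j) hsh hid ?_ ?_
      · show -ρ.l u < -ρ.r (v i)
        linarith
      · show -ρ.l u < -ρ.r (v j)
        linarith
  rcases hside 0 with h0 | h0 <;> rcases hside 1 with h1 | h1 <;>
    rcases hside 2 with h2 | h2
  · exact key 0 1 (by decide) (Or.inl ⟨h0, h1⟩)
  · exact key 0 1 (by decide) (Or.inl ⟨h0, h1⟩)
  · exact key 0 2 (by decide) (Or.inl ⟨h0, h2⟩)
  · exact key 1 2 (by decide) (Or.inr ⟨h1, h2⟩)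
  · exact key 1 2 (by decide) (Or.inl ⟨h1, h2⟩)
  · exact key 0 2 (by decide) (Or.inr ⟨h0, h2⟩)
  · exact key 0 1 (by decide) (Or.inr ⟨h0, h1⟩)
  · exact key 0 1 (by decide) (Or.inr ⟨h0, h1⟩)
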